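/- Let n ≥ 2 be an integer and let r, λ, θ : ℝ → ℝ be differentiable functions with r(u) > 0, λ(u) > 0, (r′(u))² + r(u)²·λ(u)² = 1 + r(u)², and θ′(u) = r(u)·λ(u)/(1 + r(u)²) for all u. For y ∈ ℝⁿ with |y| = 1 define φ(y,u) = (r(u)·y, √(1 + r(u)²)·sinh θ(u), √(1 + r(u)²)·cosh θ(u)) ∈ ℝ^{n+2}. Then, writing ⟨v,w⟩_L = v₁w₁ + ⋯ + v_{n+1}w_{n+1} − v_{n+2}w_{n+2} for the Lorentzian bilinear form on ℝ^{n+2}: (i) ⟨φ(y,u), φ(y,u)⟩_L = −1 for all y, u (so φ takes values in the hyperboloid model of hyperbolic space H^{n+1}); (ii) ⟨∂φ/∂u(y,u), ∂φ/∂u(y,u)⟩_L = 1 for all y, u; and (iii) φ is injective on {y ∈ ℝⁿ : |y| = 1} × ℝ. -/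

import Mathlib

open Real

/-- The rotational parametrization
`φ(y,u) = (r(u)y, √(1+r(u)²) sinh θ(u), √(1+r(u)²) cosh θ(u))` of a hypersurface of
revolution in the hyperboloid model of `H^{n+1} ⊂ ℝ^{n+2}`. -/
noncomputable def hyperbolicProfileMap (n : ℕ) (r θ : ℝ → ℝ)
    (y : EuclideanSpace ℝ (Fin n)) (u : ℝ) : Fin (n + 2) → ℝ :=
  fun i =>
    if h : (i : ℕ) < n then r u * y ⟨i, h⟩
    else if (i : ℕ) = n then Real.sqrt (1 + (r u) ^ 2) * Real.sinh (θ u)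
    else Real.sqrt (1 + (r u) ^ 2) * Real.cosh (θ u)

/-- The Lorentzian bilinear form `⟨v,w⟩_L = v₁w₁ + ⋯ + v_{n+1}w_{n+1} − v_{n+2}w_{n+2}`
on `ℝ^{n+2}` (the last coordinate carries the minus sign). -/
def lorentzForm (n : ℕ) (v w : Fin (n + 2) → ℝ) : ℝ :=
  ∑ i : Fin (n + 2), (if (i : ℕ) = n + 1 then (-1 : ℝ) else 1) * v i * w i

lemma lorentz_eval (n : ℕ) (v w : Fin (n + 2) → ℝ) (f g : Fin n → ℝ) (a b a' b' : ℝ)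
    (hv : ∀ i : Fin (n + 2), v i =
      if h : (i : ℕ) < n then f ⟨i, h⟩ else if (i : ℕ) = n then a else b)
    (hw : ∀ i : Fin (n + 2), w i =
      if h : (i : ℕ) < n then g ⟨i, h⟩ else if (i : ℕ) = n then a' else b') :
    lorentzForm n v w = (∑ i : Fin n, f i * g i) + a * a' - b * b' := by
  unfold lorentzForm
  rw [Fin.sum_univ_castSucc, Fin.sum_univ_castSucc]
  have e1 : ((Fin.last (n + 1) : Fin (n + 2)) : ℕ) = n + 1 := rfl
  have e2 : (((Fin.last n).castSucc : Fin (n + 2)) : ℕ) = n := rfl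
  have hv3 : v (Fin.last (n + 1)) = b := by
    rw [hv]; rw [e1, dif_neg (by omega), if_neg (by omega)]
  have hw3 : w (Fin.last (n + 1)) = b' := by
    rw [hw]; rw [e1, dif_neg (by omega), if_neg (by omega)]
  have hv2 : v ((Fin.last n).castSucc) = a := by
    rw [hv]; rw [e2, dif_neg (by omega), if_pos rfl]
  have hw2 : w ((Fin.last n).castSucc) = a' := by
    rw [hw]; rw [e2, dif_neg (by omega), if_pos rfl]
  rw [hv3, hw3, hv2, hw2, e1, e2, if_pos rfl, if_neg (by omega)]
  have hsum : ∀ i : Fin n,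
      (if ((i.castSucc.castSucc : Fin (n + 2)) : ℕ) = n + 1 then (-1 : ℝ) else 1) *
        v i.castSucc.castSucc * w i.castSucc.castSucc = f i * g i := by
    intro i
    have hi : ((i.castSucc.castSucc : Fin (n + 2)) : ℕ) = (i : ℕ) := rfl
    have hlt := i.isLt
    rw [hv, hw, hi, if_neg (by omega), dif_pos hlt, dif_pos hlt]
    simp
  rw [Finset.sum_congr rfl fun i _ => hsum i]
  ring

/-- If `r > 0`, `λ > 0`, `(r')² + r²λ² = 1 + r²` and
`θ' = rλ/(1+r²)`, then for every unit `y` the point `φ(y,u)` lies on the hyperboloid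
(`⟨φ,φ⟩_L = −1`), the `u`-partial derivative of `φ` is a unit spacelike vector
(`⟨∂φ/∂u, ∂φ/∂u⟩_L = 1`), and `φ` is injective on `{y : |y| = 1} × ℝ`. -/
theorem stmt_19 (n : ℕ) (hn : 2 ≤ n) (r lam θ : ℝ → ℝ)
    (hr : Differentiable ℝ r) (hlam : Differentiable ℝ lam) (hθ : Differentiable ℝ θ)
    (hrpos : ∀ u, 0 < r u) (hlampos : ∀ u, 0 < lam u)
    (hfirst : ∀ u, (deriv r u) ^ 2 + (r u) ^ 2 * (lam u) ^ 2 = 1 + (r u) ^ 2)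
    (hθ' : ∀ u, deriv θ u = r u * lam u / (1 + (r u) ^ 2)) :
    (∀ (y : EuclideanSpace ℝ (Fin n)), ‖y‖ = 1 → ∀ u : ℝ,
      lorentzForm n (hyperbolicProfileMap n r θ y u) (hyperbolicProfileMap n r θ y u) = -1 ∧
      ∃ d : Fin (n + 2) → ℝ,
        HasDerivAt (fun v => hyperbolicProfileMap n r θ y v) d u ∧ lorentzForm n d d = 1) ∧
    Set.InjOn (fun p : EuclideanSpace ℝ (Fin n) × ℝ => hyperbolicProfileMap n r θ p.1 p.2)
      ({y : EuclideanSpace ℝ (Fin n) | ‖y‖ = 1} ×ˢ (Set.univ : Set ℝ)) := by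
  have hone : ∀ u, (0:ℝ) < 1 + (r u) ^ 2 := fun u => by positivity
  have hS : ∀ u, (0:ℝ) < Real.sqrt (1 + (r u) ^ 2) := fun u => Real.sqrt_pos.2 (hone u)
  have hSsq : ∀ u, Real.sqrt (1 + (r u) ^ 2) ^ 2 = 1 + (r u) ^ 2 := fun u =>
    Real.sq_sqrt (hone u).le
  constructor
  · intro y hy u
    have hy2 : ∑ i : Fin n, y i ^ 2 = 1 := by
      have h := EuclideanSpace.norm_eq y
      rw [hy] at h
      have h2 : Real.sqrt (∑ i : Fin n, ‖y i‖ ^ 2) ^ 2 = 1 ^ 2 := by rw [← h]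
      rw [Real.sq_sqrt (by positivity)] at h2
      simpa [Real.norm_eq_abs, sq_abs] using h2
    constructor
    · unfold hyperbolicProfileMap
      rw [lorentz_eval n _ _ (fun j => r u * y j) (fun j => r u * y j)
        (Real.sqrt (1 + (r u) ^ 2) * Real.sinh (θ u))
        (Real.sqrt (1 + (r u) ^ 2) * Real.cosh (θ u))
        (Real.sqrt (1 + (r u) ^ 2) * Real.sinh (θ u))
        (Real.sqrt (1 + (r u) ^ 2) * Real.cosh (θ u))
        (fun i => rfl) (fun i => rfl)]
      have hs : ∑ i : Fin n, (r u * y i) * (r u * y i) = (r u) ^ 2 * ∑ i : Fin n, y i ^ 2 := by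
        rw [Finset.mul_sum]; apply Finset.sum_congr rfl; intro i _; ring
      rw [hs, hy2]
      have := Real.cosh_sq_sub_sinh_sq (θ u)
      nlinarith [hSsq u]
    · set S := fun u => Real.sqrt (1 + (r u) ^ 2) with hSdef
      set A := fun u => r u * deriv r u / S u with hAdef
      refine ⟨fun i => if h : (i : ℕ) < n then deriv r u * y ⟨i, h⟩
        else if (i : ℕ) = n then A u * Real.sinh (θ u) + S u * (Real.cosh (θ u) * deriv θ u)
        else A u * Real.cosh (θ u) + S u * (Real.sinh (θ u) * deriv θ u), ?_, ?_⟩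
      · rw [hasDerivAt_pi]
        intro i
        have hrd : HasDerivAt r (deriv r u) u := (hr u).hasDerivAt
        have hθd : HasDerivAt θ (deriv θ u) u := (hθ u).hasDerivAt
        have hSd : HasDerivAt S (A u) u := by
          have h1 : HasDerivAt (fun v => 1 + r v ^ 2) (2 * r u * deriv r u) u := by
            have : HasDerivAt (fun v => 1 + r v ^ 2) (((2 : ℕ) : ℝ) * r u ^ (2 - 1) * deriv r u) u :=
              ((hrd.fun_pow 2).const_add 1)
            convert this using 1
            ring
          have := h1.sqrt (ne_of_gt (hone u))
          convert this using 1
          rw [hAdef, hSdef]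
          field_simp
        by_cases h : (i : ℕ) < n
        · have hfn : (fun v => hyperbolicProfileMap n r θ y v i) = fun v => r v * y ⟨i, h⟩ := by
            funext v; unfold hyperbolicProfileMap; rw [dif_pos h]
          rw [hfn, dif_pos h]
          exact hrd.mul_const _
        · by_cases h2 : (i : ℕ) = n
          · have hfn : (fun v => hyperbolicProfileMap n r θ y v i) =
                fun v => S v * Real.sinh (θ v) := by
              funext v; unfold hyperbolicProfileMap; rw [dif_neg h, if_pos h2]
            rw [hfn, dif_neg h, if_pos h2]
            exact hSd.mul hθd.sinh
          · have hfn : (fun v => hyperbolicProfileMap n r θ y v i) =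
                fun v => S v * Real.cosh (θ v) := by
              funext v; unfold hyperbolicProfileMap; rw [dif_neg h, if_neg h2]
            rw [hfn, dif_neg h, if_neg h2]
            exact hSd.mul hθd.cosh
      · rw [lorentz_eval n _ _ (fun j => deriv r u * y j) (fun j => deriv r u * y j)
          (A u * Real.sinh (θ u) + S u * (Real.cosh (θ u) * deriv θ u))
          (A u * Real.cosh (θ u) + S u * (Real.sinh (θ u) * deriv θ u))
          (A u * Real.sinh (θ u) + S u * (Real.cosh (θ u) * deriv θ u))
          (A u * Real.cosh (θ u) + S u * (Real.sinh (θ u) * deriv θ u))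
          (fun i => rfl) (fun i => rfl)]
        have hsum : ∑ i : Fin n, (deriv r u * y i) * (deriv r u * y i) =
            (deriv r u) ^ 2 * ∑ i : Fin n, y i ^ 2 := by
          rw [Finset.mul_sum]; apply Finset.sum_congr rfl; intro i _; ring
        rw [hsum, hy2, mul_one]
        have hA2 : A u ^ 2 = (r u) ^ 2 * (deriv r u) ^ 2 / (1 + (r u) ^ 2) := by
          rw [hAdef]
          simp only
          rw [div_pow, mul_pow, hSdef]
          simp only
          rw [hSsq u]
        have hθ'u := hθ' u
        have hch := Real.cosh_sq_sub_sinh_sq (θ u)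
        have hfin := hfirst u
        have h1r : (1 + (r u) ^ 2) ≠ 0 := ne_of_gt (hone u)
        have expand : (deriv r u) ^ 2 + (A u * Real.sinh (θ u) +
            S u * (Real.cosh (θ u) * deriv θ u)) *
            (A u * Real.sinh (θ u) + S u * (Real.cosh (θ u) * deriv θ u)) -
            (A u * Real.cosh (θ u) + S u * (Real.sinh (θ u) * deriv θ u)) *
            (A u * Real.cosh (θ u) + S u * (Real.sinh (θ u) * deriv θ u)) =
            (deriv r u) ^ 2 + S u ^ 2 * (deriv θ u) ^ 2 - A u ^ 2 := by nlinarith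
        rw [expand]
        have hS2 : S u ^ 2 = 1 + (r u) ^ 2 := hSsq u
        rw [hS2, hA2, hθ'u]
        field_simp
        nlinarith [hfin]
  · have hθmono : StrictMono θ := by
      apply strictMono_of_deriv_pos
      intro u
      rw [hθ' u]
      exact div_pos (mul_pos (hrpos u) (hlampos u)) (hone u)
    rintro ⟨y, u⟩ ⟨hy, -⟩ ⟨y', u'⟩ ⟨hy', -⟩ heq
    simp only at heq
    have hn' : n < n + 2 := by omega
    have hn'' : n + 1 < n + 2 := by omega
    have c1 : ¬ ((⟨n, hn'⟩ : Fin (n + 2)) : ℕ) < n := by simp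
    have c2 : ((⟨n, hn'⟩ : Fin (n + 2)) : ℕ) = n := rfl
    have c3 : ¬ ((⟨n + 1, hn''⟩ : Fin (n + 2)) : ℕ) < n := by simp
    have c4 : ¬ ((⟨n + 1, hn''⟩ : Fin (n + 2)) : ℕ) = n := by simp
    have hsinh : Real.sqrt (1 + r u ^ 2) * Real.sinh (θ u) =
        Real.sqrt (1 + r u' ^ 2) * Real.sinh (θ u') := by
      have h := congrFun heq ⟨n, hn'⟩
      unfold hyperbolicProfileMap at h
      rwa [dif_neg c1, if_pos c2, dif_neg c1, if_pos c2] at h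
    have hcosh : Real.sqrt (1 + r u ^ 2) * Real.cosh (θ u) =
        Real.sqrt (1 + r u' ^ 2) * Real.cosh (θ u') := by
      have h := congrFun heq ⟨n + 1, hn''⟩
      unfold hyperbolicProfileMap at h
      rwa [dif_neg c3, if_neg c4, dif_neg c3, if_neg c4] at h
    have hSeq : 1 + r u ^ 2 = 1 + r u' ^ 2 := by
      have k1 : 1 + r u ^ 2 = (Real.sqrt (1 + r u ^ 2) * Real.cosh (θ u)) ^ 2 -
          (Real.sqrt (1 + r u ^ 2) * Real.sinh (θ u)) ^ 2 := by
        rw [mul_pow, mul_pow, hSsq u, Real.cosh_sq]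
        ring
      have k2 : 1 + r u' ^ 2 = (Real.sqrt (1 + r u' ^ 2) * Real.cosh (θ u')) ^ 2 -
          (Real.sqrt (1 + r u' ^ 2) * Real.sinh (θ u')) ^ 2 := by
        rw [mul_pow, mul_pow, hSsq u', Real.cosh_sq]
        ring
      rw [k1, k2, hsinh, hcosh]
    have hSS : Real.sqrt (1 + r u ^ 2) = Real.sqrt (1 + r u' ^ 2) := by rw [hSeq]
    rw [hSS] at hsinh
    have hsinh' : Real.sinh (θ u) = Real.sinh (θ u') :=
      mul_left_cancel₀ (ne_of_gt (hS u')) hsinh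
    have hθeq : θ u = θ u' := Real.sinh_injective hsinh'
    have huu : u = u' := hθmono.injective hθeq
    subst huu
    have hyy : y = y' := by
      ext i
      have hi : (i : ℕ) < n + 2 := by omega
      have hlt : ((⟨(i : ℕ), hi⟩ : Fin (n + 2)) : ℕ) < n := i.isLt
      have h := congrFun heq ⟨(i : ℕ), hi⟩
      unfold hyperbolicProfileMap at h
      rw [dif_pos hlt, dif_pos hlt] at h
      simp only [Fin.eta] at h
      exact mul_left_cancel₀ (ne_of_gt (hrpos u)) h
    rw [hyy]
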